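/- Let T > 0, n ∈ ℕ with n ≥ 1, τ = T/n, and let g : [0,T] → ℝ be absolutely continuous with g(t) = g(0) + ∫_0^t g'(s) ds and g' ∈ L²(0,T). Define g_k = (1/τ)∫_{t_{k−1}}^{t_k} g(t) dt for k = 1,…,n and g_0 = g(0), where t_k = kτ. Then Σ_{k=1}^{n} τ ((g_k − g_{k−1})/τ)² ≤ ∫_0^τ g'(s)² ds + ∫_0^T g'(s)² ds. -/

import Mathlib

set_option maxHeartbeats 1000000

open MeasureTheory

private lemma my_cs_interval (f : ℝ → ℝ) (a b : ℝ) (hab : a ≤ b)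
    (hf : IntervalIntegrable f volume a b)
    (hf2 : IntervalIntegrable (fun x => f x ^ 2) volume a b) :
    (∫ x in a..b, f x) ^ 2 ≤ (b - a) * ∫ x in a..b, f x ^ 2 := by
  set I := ∫ x in a..b, f x with hI
  set S := ∫ x in a..b, f x ^ 2 with hS
  have key : ∀ c : ℝ, 0 ≤ (b - a) * (c * c) + (-2 * I) * c + S := by
    intro c
    have h0 : 0 ≤ ∫ x in a..b, (f x - c) ^ 2 :=
      intervalIntegral.integral_nonneg hab (fun x _ => sq_nonneg _)
    have hexp : ∫ x in a..b, (f x - c) ^ 2 = S - 2 * c * I + c ^ 2 * (b - a) := by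
      have h1 : ∀ x, (f x - c) ^ 2 = f x ^ 2 - (2 * c) * f x + c ^ 2 := by intro x; ring
      simp_rw [h1]
      rw [intervalIntegral.integral_add (hf2.sub (hf.const_mul _)) intervalIntegrable_const,
        intervalIntegral.integral_sub hf2 (hf.const_mul _),
        intervalIntegral.integral_const_mul, intervalIntegral.integral_const]
      simp [smul_eq_mul]; ring
    rw [hexp] at h0; nlinarith [h0]
  have hd := discrim_le_zero key
  rw [discrim] at hd
  nlinarith [hd]

private lemma my_GP (T : ℝ) (hT : 0 < T) (n : ℕ) (hn : 1 ≤ n) (τ : ℝ) (hτ : 0 < τ)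
    (hnτ : (n:ℝ) * τ = T)
    (g g' : ℝ → ℝ)
    (P : ℝ → ℝ) (hPdef : P = fun t => ∫ s in (0:ℝ)..t, g' s)
    (hPc : ContinuousOn P (Set.Icc 0 T))
    (hac : ∀ t ∈ Set.Icc (0 : ℝ) T, g t = g 0 + ∫ s in (0 : ℝ)..t, g' s)
    (G : ℕ → ℝ)
    (hGk : ∀ k, 1 ≤ k → k ≤ n →
      G k = (1 / τ) * ∫ t in ((k : ℝ) - 1) * τ..(k : ℝ) * τ, g t) :
    ∀ k : ℕ, 1 ≤ k → k ≤ n →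
      G k = g 0 + (1/τ) * ∫ t in ((k:ℝ)-1)*τ..(k:ℝ)*τ, P t := by
  have hn1 : (1:ℝ) ≤ (n:ℝ) := by exact_mod_cast hn
  have hPii : ∀ a b : ℝ, a ∈ Set.Icc (0:ℝ) T → b ∈ Set.Icc (0:ℝ) T →
      IntervalIntegrable P volume a b := fun a b ha hb =>
    (hPc.mono (Set.uIcc_subset_Icc ha hb)).intervalIntegrable
  intro k hk1 hkn
  have hk1' : (1:ℝ) ≤ (k:ℝ) := by exact_mod_cast hk1
  have hkn' : (k:ℝ) ≤ (n:ℝ) := by exact_mod_cast hkn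
  have ha : ((k:ℝ)-1)*τ ∈ Set.Icc (0:ℝ) T := ⟨by nlinarith, by nlinarith⟩
  have hb : (k:ℝ)*τ ∈ Set.Icc (0:ℝ) T := ⟨by nlinarith, by nlinarith⟩
  have hcongr : (∫ t in ((k:ℝ)-1)*τ..(k:ℝ)*τ, g t)
      = ∫ t in ((k:ℝ)-1)*τ..(k:ℝ)*τ, (g 0 + P t) := by
    apply intervalIntegral.integral_congr
    intro t ht
    rw [hPdef]
    exact hac t (Set.uIcc_subset_Icc ha hb ht)
  rw [hGk k hk1 hkn, hcongr,
    intervalIntegral.integral_add intervalIntegrable_const (hPii _ _ ha hb),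
    intervalIntegral.integral_const]
  have : ((k:ℝ)*τ - ((k:ℝ)-1)*τ) = τ := by ring
  rw [this, smul_eq_mul, mul_add]
  rw [one_div, inv_mul_cancel_left₀ hτ.ne']

private lemma my_diff (T : ℝ) (hT : 0 < T) (n : ℕ) (hn : 1 ≤ n) (τ : ℝ) (hτ : 0 < τ)
    (hnτ : (n:ℝ) * τ = T)
    (g g' : ℝ → ℝ)
    (P : ℝ → ℝ)
    (G : ℕ → ℝ)
    (hGP : ∀ k : ℕ, 1 ≤ k → k ≤ n →
      G k = g 0 + (1/τ) * ∫ t in ((k:ℝ)-1)*τ..(k:ℝ)*τ, P t)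
    (hA : ∀ k : ℕ, 2 ≤ k → k ≤ n →
      IntervalIntegrable (fun u => P (((k:ℝ)-1)*τ + u)) volume 0 τ)
    (hB : ∀ k : ℕ, 2 ≤ k → k ≤ n →
      IntervalIntegrable (fun u => P (((k:ℝ)-2)*τ + u)) volume 0 τ) :
    ∀ k : ℕ, 2 ≤ k → k ≤ n →
      G k - G (k-1) = (1/τ) * ∫ u in (0:ℝ)..τ,
        (P (((k:ℝ)-1)*τ + u) - P (((k:ℝ)-2)*τ + u)) := by
  intro k hk2 hkn
  have h1 : G k = g 0 + (1/τ) * ∫ t in ((k:ℝ)-1)*τ..(k:ℝ)*τ, P t := hGP k (by omega) hkn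
  have h2 : G (k-1) = g 0 + (1/τ) * ∫ t in ((k:ℝ)-2)*τ..((k:ℝ)-1)*τ, P t := by
    have h := hGP (k-1) (by omega) (by omega)
    have hc : ((k-1:ℕ):ℝ) = (k:ℝ) - 1 := by
      have h1k : (1:ℕ) ≤ k := by omega
      push_cast [Nat.cast_sub h1k]
      ring
    rw [h, hc, show (k:ℝ)-1-1 = (k:ℝ)-2 from by ring]
  have hshift : ∀ c : ℝ, (∫ u in (0:ℝ)..τ, P (c + u)) = ∫ t in c..(c+τ), P t := by
    intro c
    rw [intervalIntegral.integral_comp_add_left P c, add_zero]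
  have e1 : (∫ t in ((k:ℝ)-1)*τ..(k:ℝ)*τ, P t) = ∫ u in (0:ℝ)..τ, P (((k:ℝ)-1)*τ + u) := by
    rw [hshift]
    congr 1
    ring
  have e2 : (∫ t in ((k:ℝ)-2)*τ..((k:ℝ)-1)*τ, P t)
      = ∫ u in (0:ℝ)..τ, P (((k:ℝ)-2)*τ + u) := by
    rw [hshift]
    congr 1
    ring
  rw [h1, h2, e1, e2, intervalIntegral.integral_sub (hA k hk2 hkn) (hB k hk2 hkn)]
  ring

private lemma my_term (T : ℝ) (hT : 0 < T) (n : ℕ) (hn : 1 ≤ n) (τ : ℝ) (hτ : 0 < τ)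
    (hnτ : (n:ℝ) * τ = T)
    (g g' : ℝ → ℝ)
    (P H : ℝ → ℝ) (hPdef : P = fun t => ∫ s in (0:ℝ)..t, g' s)
    (hHdef : H = fun t => ∫ s in (0:ℝ)..t, g' s ^ 2)
    (hPc : ContinuousOn P (Set.Icc 0 T))
    (hHc : ContinuousOn H (Set.Icc 0 T))
    (hii : ∀ a b : ℝ, a ∈ Set.Icc (0:ℝ) T → b ∈ Set.Icc (0:ℝ) T →
      IntervalIntegrable g' volume a b)
    (hsqii : ∀ a b : ℝ, a ∈ Set.Icc (0:ℝ) T → b ∈ Set.Icc (0:ℝ) T →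
      IntervalIntegrable (fun s => g' s ^ 2) volume a b)
    (G : ℕ → ℝ)
    (hdiff : ∀ k : ℕ, 2 ≤ k → k ≤ n →
      G k - G (k-1) = (1/τ) * ∫ u in (0:ℝ)..τ,
        (P (((k:ℝ)-1)*τ + u) - P (((k:ℝ)-2)*τ + u))) :
    ∀ k : ℕ, 2 ≤ k → k ≤ n →
      τ * ((G k - G (k-1)) / τ) ^ 2
        ≤ (∫ u in (0:ℝ)..τ, (∫ s in ((k:ℝ)-2)*τ+u..((k:ℝ)-1)*τ+u, g' s ^ 2)) / τ := by
  have hn1 : (1:ℝ) ≤ (n:ℝ) := by exact_mod_cast hn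
  intro k hk2 hkn
  have hk2' : (2:ℝ) ≤ (k:ℝ) := by exact_mod_cast hk2
  have hkn' : (k:ℝ) ≤ (n:ℝ) := by exact_mod_cast hkn
  have hτT : τ ≤ T := by nlinarith
  have hmem : ∀ u ∈ Set.Icc (0:ℝ) τ, ∀ c : ℝ, 0 ≤ c → c + τ ≤ T →
      c + u ∈ Set.Icc (0:ℝ) T := by
    intro u hu c hc hcT
    exact ⟨by linarith [hu.1], by linarith [hu.2]⟩
  have hc1 : (0:ℝ) ≤ ((k:ℝ)-2)*τ := by nlinarith
  have hc1T : ((k:ℝ)-2)*τ + τ ≤ T := by nlinarith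
  have hc2 : (0:ℝ) ≤ ((k:ℝ)-1)*τ := by nlinarith
  have hc2T : ((k:ℝ)-1)*τ + τ ≤ T := by nlinarith
  have hmem1 : ∀ u ∈ Set.Icc (0:ℝ) τ, ((k:ℝ)-2)*τ + u ∈ Set.Icc (0:ℝ) T :=
    fun u hu => hmem u hu _ hc1 hc1T
  have hmem2 : ∀ u ∈ Set.Icc (0:ℝ) τ, ((k:ℝ)-1)*τ + u ∈ Set.Icc (0:ℝ) T :=
    fun u hu => hmem u hu _ hc2 hc2T
  have h0T : (0:ℝ) ∈ Set.Icc (0:ℝ) T := ⟨le_rfl, hT.le⟩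
  set W : ℝ → ℝ := fun u => ∫ s in ((k:ℝ)-2)*τ+u..((k:ℝ)-1)*τ+u, g' s with hWdef
  set F : ℝ → ℝ := fun u => ∫ s in ((k:ℝ)-2)*τ+u..((k:ℝ)-1)*τ+u, g' s ^ 2 with hFdef
  have hWP : ∀ u ∈ Set.Icc (0:ℝ) τ,
      W u = P (((k:ℝ)-1)*τ + u) - P (((k:ℝ)-2)*τ + u) := by
    intro u hu
    rw [hWdef, hPdef]
    exact (intervalIntegral.integral_interval_sub_left
      (hii 0 _ h0T (hmem2 u hu)) (hii 0 _ h0T (hmem1 u hu))).symm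
  have hFH : ∀ u ∈ Set.Icc (0:ℝ) τ,
      F u = H (((k:ℝ)-1)*τ + u) - H (((k:ℝ)-2)*τ + u) := by
    intro u hu
    rw [hFdef, hHdef]
    exact (intervalIntegral.integral_interval_sub_left
      (hsqii 0 _ h0T (hmem2 u hu)) (hsqii 0 _ h0T (hmem1 u hu))).symm
  have hcomp : ∀ c : ℝ, 0 ≤ c → c + τ ≤ T → ∀ Φ : ℝ → ℝ, ContinuousOn Φ (Set.Icc 0 T) →
      ContinuousOn (fun u => Φ (c + u)) (Set.Icc (0:ℝ) τ) := by
    intro c hc hcT Φ hΦ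
    apply hΦ.comp (Continuous.continuousOn (by continuity))
    intro u hu
    simp only [Set.mem_Icc] at hu ⊢
    exact ⟨by linarith [hu.1], by linarith [hu.2]⟩
  have huIcc : Set.uIcc (0:ℝ) τ = Set.Icc 0 τ := Set.uIcc_of_le hτ.le
  have hWc : ContinuousOn W (Set.Icc (0:ℝ) τ) :=
    (((hcomp _ hc2 hc2T P hPc).sub (hcomp _ hc1 hc1T P hPc))).congr hWP
  have hFc : ContinuousOn F (Set.Icc (0:ℝ) τ) :=
    (((hcomp _ hc2 hc2T H hHc).sub (hcomp _ hc1 hc1T H hHc))).congr hFH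
  have hWi : IntervalIntegrable W volume 0 τ := (huIcc ▸ hWc).intervalIntegrable
  have hW2i : IntervalIntegrable (fun u => W u ^ 2) volume 0 τ :=
    (huIcc ▸ (hWc.pow 2)).intervalIntegrable
  have hFi : IntervalIntegrable F volume 0 τ := (huIcc ▸ hFc).intervalIntegrable
  have hcs1 : (∫ u in (0:ℝ)..τ, W u) ^ 2 ≤ τ * ∫ u in (0:ℝ)..τ, W u ^ 2 := by
    have h := my_cs_interval W 0 τ hτ.le hWi hW2i
    rwa [sub_zero] at h
  have hptw : ∀ u ∈ Set.Icc (0:ℝ) τ, W u ^ 2 ≤ τ * F u := by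
    intro u hu
    have hab : ((k:ℝ)-2)*τ+u ≤ ((k:ℝ)-1)*τ+u := by nlinarith
    have h := my_cs_interval g' _ _ hab (hii _ _ (hmem1 u hu) (hmem2 u hu))
      (hsqii _ _ (hmem1 u hu) (hmem2 u hu))
    have hlen : ((k:ℝ)-1)*τ+u - (((k:ℝ)-2)*τ+u) = τ := by ring
    rw [hlen] at h
    exact h
  have hmono2 : (∫ u in (0:ℝ)..τ, W u ^ 2) ≤ τ * ∫ u in (0:ℝ)..τ, F u := by
    have h := intervalIntegral.integral_mono_on hτ.le hW2i (hFi.const_mul τ) hptw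
    rwa [intervalIntegral.integral_const_mul] at h
  have hdiff2 : G k - G (k-1) = (1/τ) * ∫ u in (0:ℝ)..τ, W u := by
    rw [hdiff k hk2 hkn]
    congr 1
    apply intervalIntegral.integral_congr
    intro u hu
    rw [huIcc] at hu
    exact (hWP u hu).symm
  rw [hdiff2]
  set X := ∫ u in (0:ℝ)..τ, W u
  set Y := ∫ u in (0:ℝ)..τ, W u ^ 2
  set Z := ∫ u in (0:ℝ)..τ, F u
  clear_value X Y Z
  have h3 : τ * ((1/τ * X)/τ)^2 = X^2/τ^3 := by
    field_simp
  rw [h3, div_le_div_iff₀ (by positivity) hτ]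
  calc X^2*τ ≤ (τ*Y)*τ := mul_le_mul_of_nonneg_right hcs1 hτ.le
    _ = Y*τ^2 := by ring
    _ ≤ (τ*Z)*τ^2 := mul_le_mul_of_nonneg_right hmono2 (by positivity)
    _ = Z*τ^3 := by ring

private lemma my_Fi (T : ℝ) (hT : 0 < T) (n : ℕ) (hn : 1 ≤ n) (τ : ℝ) (hτ : 0 < τ)
    (hnτ : (n:ℝ) * τ = T)
    (g' H : ℝ → ℝ)
    (hHdef : H = fun t => ∫ s in (0:ℝ)..t, g' s ^ 2)
    (hHc : ContinuousOn H (Set.Icc 0 T))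
    (hsqii : ∀ a b : ℝ, a ∈ Set.Icc (0:ℝ) T → b ∈ Set.Icc (0:ℝ) T →
      IntervalIntegrable (fun s => g' s ^ 2) volume a b) :
    ∀ k : ℕ, 2 ≤ k → k ≤ n → IntervalIntegrable
      (fun u => ∫ s in ((k:ℝ)-2)*τ+u..((k:ℝ)-1)*τ+u, g' s ^ 2) volume 0 τ := by
  have hn1 : (1:ℝ) ≤ (n:ℝ) := by exact_mod_cast hn
  intro k hk2 hkn
  have hk2' : (2:ℝ) ≤ (k:ℝ) := by exact_mod_cast hk2
  have hkn' : (k:ℝ) ≤ (n:ℝ) := by exact_mod_cast hkn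
  have hc1 : (0:ℝ) ≤ ((k:ℝ)-2)*τ := by nlinarith
  have hc1T : ((k:ℝ)-2)*τ + τ ≤ T := by nlinarith
  have hc2 : (0:ℝ) ≤ ((k:ℝ)-1)*τ := by nlinarith
  have hc2T : ((k:ℝ)-1)*τ + τ ≤ T := by nlinarith
  have h0T : (0:ℝ) ∈ Set.Icc (0:ℝ) T := ⟨le_rfl, hT.le⟩
  have hmem : ∀ u ∈ Set.Icc (0:ℝ) τ, ∀ c : ℝ, 0 ≤ c → c + τ ≤ T →
      c + u ∈ Set.Icc (0:ℝ) T := by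
    intro u hu c hc hcT
    exact ⟨by linarith [hu.1], by linarith [hu.2]⟩
  have hcomp : ∀ c : ℝ, 0 ≤ c → c + τ ≤ T →
      ContinuousOn (fun u => H (c + u)) (Set.Icc (0:ℝ) τ) := by
    intro c hc hcT
    apply hHc.comp (Continuous.continuousOn (by continuity))
    intro u hu
    simp only [Set.mem_Icc] at hu ⊢
    exact ⟨by linarith [hu.1], by linarith [hu.2]⟩
  have hFH : ∀ u ∈ Set.Icc (0:ℝ) τ,
      (∫ s in ((k:ℝ)-2)*τ+u..((k:ℝ)-1)*τ+u, g' s ^ 2)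
        = H (((k:ℝ)-1)*τ + u) - H (((k:ℝ)-2)*τ + u) := by
    intro u hu
    rw [hHdef]
    exact (intervalIntegral.integral_interval_sub_left
      (hsqii 0 _ h0T (hmem u hu _ hc2 hc2T)) (hsqii 0 _ h0T (hmem u hu _ hc1 hc1T))).symm
  have hFc : ContinuousOn
      (fun u => ∫ s in ((k:ℝ)-2)*τ+u..((k:ℝ)-1)*τ+u, g' s ^ 2) (Set.Icc (0:ℝ) τ) :=
    ((hcomp _ hc2 hc2T).sub (hcomp _ hc1 hc1T)).congr hFH
  exact (Set.uIcc_of_le hτ.le ▸ hFc).intervalIntegrable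

private lemma my_sum (T : ℝ) (hT : 0 < T) (n : ℕ) (hn : 1 ≤ n) (τ : ℝ) (hτ : 0 < τ)
    (hnτ : (n:ℝ) * τ = T)
    (g' : ℝ → ℝ)
    (hsqii : ∀ a b : ℝ, a ∈ Set.Icc (0:ℝ) T → b ∈ Set.Icc (0:ℝ) T →
      IntervalIntegrable (fun s => g' s ^ 2) volume a b)
    (hFi : ∀ k : ℕ, 2 ≤ k → k ≤ n → IntervalIntegrable
      (fun u => ∫ s in ((k:ℝ)-2)*τ+u..((k:ℝ)-1)*τ+u, g' s ^ 2) volume 0 τ) :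
    ∑ k ∈ Finset.Icc 2 n,
        ((∫ u in (0:ℝ)..τ, (∫ s in ((k:ℝ)-2)*τ+u..((k:ℝ)-1)*τ+u, g' s ^ 2)) / τ)
      ≤ ∫ s in (0:ℝ)..T, g' s ^ 2 := by
  have hn1 : (1:ℝ) ≤ (n:ℝ) := by exact_mod_cast hn
  set C := ∫ s in (0:ℝ)..T, g' s ^ 2 with hC
  have h0T : (0:ℝ) ∈ Set.Icc (0:ℝ) T := ⟨le_rfl, hT.le⟩
  have hTT : T ∈ Set.Icc (0:ℝ) T := ⟨hT.le, le_rfl⟩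
  have hptsum : ∀ u ∈ Set.Icc (0:ℝ) τ,
      (∑ k ∈ Finset.Icc 2 n, ∫ s in ((k:ℝ)-2)*τ+u..((k:ℝ)-1)*τ+u, g' s ^ 2) ≤ C := by
    intro u hu
    obtain ⟨hu0, huτ⟩ := hu
    rw [← Finset.Ico_add_one_right_eq_Icc, Finset.sum_Ico_eq_sum_range]
    have hre : ∀ i : ℕ,
        (∫ s in (((2+i:ℕ):ℝ)-2)*τ+u..(((2+i:ℕ):ℝ)-1)*τ+u, g' s ^ 2)
          = ∫ s in ((i:ℕ):ℝ)*τ+u..(((i+1:ℕ)):ℝ)*τ+u, g' s ^ 2 := by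
      intro i
      congr 1 <;> push_cast <;> ring
    simp_rw [hre]
    have hmemj : ∀ i : ℕ, i ≤ n - 1 → ((i:ℕ):ℝ)*τ+u ∈ Set.Icc (0:ℝ) T := by
      intro i hi
      have hi' : (i:ℝ) ≤ (n:ℝ) - 1 := by
        have : (i:ℝ) ≤ ((n-1:ℕ):ℝ) := by exact_mod_cast hi
        rwa [Nat.cast_sub hn, Nat.cast_one] at this
      exact ⟨by positivity, by nlinarith⟩
    have htel : ∑ i ∈ Finset.range (n+1-2),
        (∫ s in ((i:ℕ):ℝ)*τ+u..(((i+1:ℕ)):ℝ)*τ+u, g' s ^ 2)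
          = ∫ s in ((0:ℕ):ℝ)*τ+u..(((n+1-2:ℕ)):ℝ)*τ+u, g' s ^ 2 := by
      apply intervalIntegral.sum_integral_adjacent_intervals
        (a := fun j : ℕ => ((j:ℕ):ℝ)*τ+u)
      intro i hi
      exact hsqii _ _ (hmemj i (by omega)) (hmemj (i+1) (by omega))
    rw [htel]
    have hcast : (((n+1-2:ℕ)):ℝ) = (n:ℝ) - 1 := by
      have : n+1-2 = n-1 := by omega
      rw [this, Nat.cast_sub hn, Nat.cast_one]
    rw [hcast]
    push_cast
    rw [zero_mul, zero_add]
    apply intervalIntegral.integral_mono_interval hu0 (by nlinarith) (by nlinarith)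
      (Filter.Eventually.of_forall fun x => sq_nonneg _) (hsqii 0 T h0T hTT)
  rw [← Finset.sum_div]
  rw [← intervalIntegral.integral_finset_sum (fun k hk => by
    rw [Finset.mem_Icc] at hk
    exact hFi k hk.1 hk.2)]
  have hsum_int : IntervalIntegrable
      (fun u => ∑ k ∈ Finset.Icc 2 n, ∫ s in ((k:ℝ)-2)*τ+u..((k:ℝ)-1)*τ+u, g' s ^ 2)
      volume 0 τ := by
    have hfn : (fun u => ∑ k ∈ Finset.Icc 2 n, ∫ s in ((k:ℝ)-2)*τ+u..((k:ℝ)-1)*τ+u, g' s ^ 2)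
        = ∑ k ∈ Finset.Icc 2 n, (fun u => ∫ s in ((k:ℝ)-2)*τ+u..((k:ℝ)-1)*τ+u, g' s ^ 2) := by
      ext u
      simp
    rw [hfn]
    apply IntervalIntegrable.sum
    intro k hk
    rw [Finset.mem_Icc] at hk
    exact hFi k hk.1 hk.2
  have hbound : (∫ u in (0:ℝ)..τ,
      ∑ k ∈ Finset.Icc 2 n, ∫ s in ((k:ℝ)-2)*τ+u..((k:ℝ)-1)*τ+u, g' s ^ 2) ≤ τ * C := by
    have h := intervalIntegral.integral_mono_on hτ.le hsum_int intervalIntegrable_const hptsum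
    rwa [intervalIntegral.integral_const, smul_eq_mul, sub_zero] at h
  rw [div_le_iff₀ hτ]
  linarith [hbound]

private lemma my_term1 (T : ℝ) (hT : 0 < T) (n : ℕ) (hn : 1 ≤ n) (τ : ℝ) (hτ : 0 < τ)
    (hnτ : (n:ℝ) * τ = T)
    (g g' : ℝ → ℝ)
    (P : ℝ → ℝ) (hPdef : P = fun t => ∫ s in (0:ℝ)..t, g' s)
    (hPc : ContinuousOn P (Set.Icc 0 T))
    (hii : ∀ a b : ℝ, a ∈ Set.Icc (0:ℝ) T → b ∈ Set.Icc (0:ℝ) T →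
      IntervalIntegrable g' volume a b)
    (hsqii : ∀ a b : ℝ, a ∈ Set.Icc (0:ℝ) T → b ∈ Set.Icc (0:ℝ) T →
      IntervalIntegrable (fun s => g' s ^ 2) volume a b)
    (G : ℕ → ℝ) (hG0 : G 0 = g 0)
    (hGP : ∀ k : ℕ, 1 ≤ k → k ≤ n →
      G k = g 0 + (1/τ) * ∫ t in ((k:ℝ)-1)*τ..(k:ℝ)*τ, P t) :
    τ * ((G 1 - G 0) / τ) ^ 2 ≤ ∫ s in (0:ℝ)..τ, g' s ^ 2 := by
  have hn1 : (1:ℝ) ≤ (n:ℝ) := by exact_mod_cast hn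
  have hτT : τ ≤ T := by nlinarith
  have h0T : (0:ℝ) ∈ Set.Icc (0:ℝ) T := ⟨le_rfl, hT.le⟩
  have hτmem : τ ∈ Set.Icc (0:ℝ) T := ⟨hτ.le, hτT⟩
  have hmemt : ∀ t ∈ Set.Icc (0:ℝ) τ, t ∈ Set.Icc (0:ℝ) T := by
    intro t ht
    exact ⟨ht.1, le_trans ht.2 hτT⟩
  set C1 := ∫ s in (0:ℝ)..τ, g' s ^ 2 with hC1
  have hC1nn : 0 ≤ C1 := intervalIntegral.integral_nonneg hτ.le (fun x _ => sq_nonneg _)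
  have h1 : G 1 = g 0 + (1/τ) * ∫ t in (0:ℝ)..τ, P t := by
    have h := hGP 1 le_rfl hn
    norm_num at h
    rw [one_div]
    exact h
  have hd : G 1 - G 0 = (1/τ) * ∫ t in (0:ℝ)..τ, P t := by
    rw [h1, hG0]; ring
  have hPt : ∀ t ∈ Set.Icc (0:ℝ) τ, P t ^ 2 ≤ τ * C1 := by
    intro t ht
    have hcs := my_cs_interval g' 0 t ht.1 (hii 0 t h0T (hmemt t ht))
      (hsqii 0 t h0T (hmemt t ht))
    rw [sub_zero] at hcs
    have hmono : (∫ s in (0:ℝ)..t, g' s ^ 2) ≤ C1 :=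
      intervalIntegral.integral_mono_interval le_rfl ht.1 ht.2
        (Filter.Eventually.of_forall fun x => sq_nonneg _) (hsqii 0 τ h0T hτmem)
    have hnn : 0 ≤ ∫ s in (0:ℝ)..t, g' s ^ 2 :=
      intervalIntegral.integral_nonneg ht.1 (fun x _ => sq_nonneg _)
    have hPt' : P t = ∫ s in (0:ℝ)..t, g' s := by rw [hPdef]
    rw [hPt']
    nlinarith [ht.1, ht.2, hcs, hmono, hnn]
  have hPcτ : ContinuousOn P (Set.Icc (0:ℝ) τ) := hPc.mono (Set.Icc_subset_Icc le_rfl hτT)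
  have hPi : IntervalIntegrable P volume 0 τ :=
    (Set.uIcc_of_le hτ.le ▸ hPcτ).intervalIntegrable
  have hP2i : IntervalIntegrable (fun t => P t ^ 2) volume 0 τ :=
    (Set.uIcc_of_le hτ.le ▸ (hPcτ.pow 2)).intervalIntegrable
  have hcs2 : (∫ t in (0:ℝ)..τ, P t) ^ 2 ≤ τ * ∫ t in (0:ℝ)..τ, P t ^ 2 := by
    have h := my_cs_interval P 0 τ hτ.le hPi hP2i
    rwa [sub_zero] at h
  have hint2 : (∫ t in (0:ℝ)..τ, P t ^ 2) ≤ τ * (τ * C1) := by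
    have h := intervalIntegral.integral_mono_on hτ.le hP2i intervalIntegrable_const hPt
    rwa [intervalIntegral.integral_const, smul_eq_mul, sub_zero] at h
  rw [hd]
  set X := ∫ t in (0:ℝ)..τ, P t
  set Y := ∫ t in (0:ℝ)..τ, P t ^ 2
  clear_value X Y
  have h3 : τ * ((1/τ * X)/τ)^2 = X^2/τ^3 := by
    field_simp
  rw [h3, div_le_iff₀ (by positivity)]
  calc X^2 ≤ τ*Y := hcs2
    _ ≤ τ*(τ*(τ*C1)) := by nlinarith [hint2, hτ]
    _ = C1 * τ^3 := by ring

/-- Bound on the discrete time-difference quotients of the Steklov averages of an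
absolutely continuous function with square-integrable derivative. -/
theorem steklov_difference_quotients_bound (T : ℝ) (hT : 0 < T) (n : ℕ) (hn : 1 ≤ n)
    (g g' : ℝ → ℝ)
    (hint : IntegrableOn g' (Set.Icc (0 : ℝ) T))
    (hac : ∀ t ∈ Set.Icc (0 : ℝ) T, g t = g 0 + ∫ s in (0 : ℝ)..t, g' s)
    (hL2 : MemLp g' 2 (volume.restrict (Set.Ioc (0 : ℝ) T)))
    (G : ℕ → ℝ) (hG0 : G 0 = g 0)
    (hGk : ∀ k, 1 ≤ k → k ≤ n →
      G k = (1 / (T / n)) * ∫ t in ((k : ℝ) - 1) * (T / n)..(k : ℝ) * (T / n), g t) :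
    ∑ k ∈ Finset.Icc 1 n, (T / n) * ((G k - G (k - 1)) / (T / n)) ^ 2
      ≤ (∫ s in (0 : ℝ)..(T / n), (g' s) ^ 2) + ∫ s in (0 : ℝ)..T, (g' s) ^ 2 := by
  have hn' : (0:ℝ) < (n:ℝ) := by
    have : 0 < n := by omega
    exact_mod_cast this
  have hn1 : (1:ℝ) ≤ (n:ℝ) := by exact_mod_cast hn
  set τ := T / (n:ℝ) with hτdef
  have hτ : 0 < τ := div_pos hT hn'
  have hnτ : (n:ℝ) * τ = T := by
    rw [hτdef]
    field_simp
  set P : ℝ → ℝ := fun t => ∫ s in (0:ℝ)..t, g' s with hPdef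
  set H : ℝ → ℝ := fun t => ∫ s in (0:ℝ)..t, g' s ^ 2 with hHdef
  have hsq : IntegrableOn (fun s => g' s ^ 2) (Set.Ioc (0:ℝ) T) := hL2.integrable_sq
  have hii : ∀ a b : ℝ, a ∈ Set.Icc (0:ℝ) T → b ∈ Set.Icc (0:ℝ) T →
      IntervalIntegrable g' volume a b := fun a b ha hb =>
    (hint.mono_set (Set.uIcc_subset_Icc ha hb)).intervalIntegrable
  have hsqii : ∀ a b : ℝ, a ∈ Set.Icc (0:ℝ) T → b ∈ Set.Icc (0:ℝ) T →
      IntervalIntegrable (fun s => g' s ^ 2) volume a b := by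
    intro a b ha hb
    rw [intervalIntegrable_iff]
    refine hsq.mono_set ?_
    rw [Set.uIoc]
    exact Set.Ioc_subset_Ioc (le_min ha.1 hb.1) (max_le ha.2 hb.2)
  have hPc : ContinuousOn P (Set.Icc 0 T) := by
    have h := intervalIntegral.continuousOn_primitive_interval
      (f := g') (a := (0:ℝ)) (b := T) (μ := volume) (by rwa [Set.uIcc_of_le hT.le])
    rwa [Set.uIcc_of_le hT.le] at h
  have hHc : ContinuousOn H (Set.Icc 0 T) := by
    have hsq' : IntegrableOn (fun s => g' s ^ 2) (Set.uIcc (0:ℝ) T) := by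
      rw [Set.uIcc_of_le hT.le, integrableOn_Icc_iff_integrableOn_Ioc]
      exact hsq
    have h := intervalIntegral.continuousOn_primitive_interval hsq'
    rwa [Set.uIcc_of_le hT.le] at h
  have hGP : ∀ k : ℕ, 1 ≤ k → k ≤ n →
      G k = g 0 + (1/τ) * ∫ t in ((k:ℝ)-1)*τ..(k:ℝ)*τ, P t :=
    my_GP T hT n hn τ hτ hnτ g g' P hPdef hPc hac G hGk
  -- integrability of the shifted primitives
  have hshift_i : ∀ k : ℕ, 2 ≤ k → k ≤ n → ∀ c : ℝ, 0 ≤ c → c + τ ≤ T →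
      IntervalIntegrable (fun u => P (c + u)) volume 0 τ := by
    intro k hk2 hkn c hc hcT
    have hcomp : ContinuousOn (fun u => P (c + u)) (Set.Icc (0:ℝ) τ) := by
      apply hPc.comp (Continuous.continuousOn (by continuity))
      intro u hu
      simp only [Set.mem_Icc] at hu ⊢
      exact ⟨by linarith [hu.1], by linarith [hu.2]⟩
    exact (Set.uIcc_of_le hτ.le ▸ hcomp).intervalIntegrable
  have hA : ∀ k : ℕ, 2 ≤ k → k ≤ n →
      IntervalIntegrable (fun u => P (((k:ℝ)-1)*τ + u)) volume 0 τ := by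
    intro k hk2 hkn
    have hk2' : (2:ℝ) ≤ (k:ℝ) := by exact_mod_cast hk2
    have hkn' : (k:ℝ) ≤ (n:ℝ) := by exact_mod_cast hkn
    exact hshift_i k hk2 hkn _ (by nlinarith) (by nlinarith)
  have hB : ∀ k : ℕ, 2 ≤ k → k ≤ n →
      IntervalIntegrable (fun u => P (((k:ℝ)-2)*τ + u)) volume 0 τ := by
    intro k hk2 hkn
    have hk2' : (2:ℝ) ≤ (k:ℝ) := by exact_mod_cast hk2
    have hkn' : (k:ℝ) ≤ (n:ℝ) := by exact_mod_cast hkn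
    exact hshift_i k hk2 hkn _ (by nlinarith) (by nlinarith)
  have hdiff : ∀ k : ℕ, 2 ≤ k → k ≤ n →
      G k - G (k-1) = (1/τ) * ∫ u in (0:ℝ)..τ,
        (P (((k:ℝ)-1)*τ + u) - P (((k:ℝ)-2)*τ + u)) :=
    my_diff T hT n hn τ hτ hnτ g g' P G hGP hA hB
  have hterm : ∀ k : ℕ, 2 ≤ k → k ≤ n →
      τ * ((G k - G (k-1)) / τ) ^ 2
        ≤ (∫ u in (0:ℝ)..τ, (∫ s in ((k:ℝ)-2)*τ+u..((k:ℝ)-1)*τ+u, g' s ^ 2)) / τ :=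
    my_term T hT n hn τ hτ hnτ g g' P H hPdef hHdef hPc hHc hii hsqii G hdiff
  have hFi := my_Fi T hT n hn τ hτ hnτ g' H hHdef hHc hsqii
  have hsum := my_sum T hT n hn τ hτ hnτ g' hsqii hFi
  have hterm1 : τ * ((G 1 - G 0) / τ) ^ 2 ≤ ∫ s in (0:ℝ)..τ, g' s ^ 2 :=
    my_term1 T hT n hn τ hτ hnτ g g' P hPdef hPc hii hsqii G hG0 hGP
  have hsplit : Finset.Icc 1 n = insert 1 (Finset.Icc 2 n) := by
    ext x
    simp only [Finset.mem_Icc, Finset.mem_insert]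
    omega
  rw [hsplit, Finset.sum_insert (by simp)]
  have htail : ∑ k ∈ Finset.Icc 2 n, τ * ((G k - G (k-1)) / τ) ^ 2
      ≤ ∫ s in (0:ℝ)..T, g' s ^ 2 := by
    calc ∑ k ∈ Finset.Icc 2 n, τ * ((G k - G (k-1)) / τ) ^ 2
        ≤ ∑ k ∈ Finset.Icc 2 n,
            ((∫ u in (0:ℝ)..τ, (∫ s in ((k:ℝ)-2)*τ+u..((k:ℝ)-1)*τ+u, g' s ^ 2)) / τ) := by
          apply Finset.sum_le_sum
          intro k hk
          rw [Finset.mem_Icc] at hk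
          exact hterm k hk.1 hk.2
      _ ≤ ∫ s in (0:ℝ)..T, g' s ^ 2 := hsum
  exact add_le_add hterm1 htail
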